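/- Let ν > 1 and 0 < r₋ < r₊ be real numbers, and let r > r₊. Set s := √(r₊ r₋ (ν²+3)), R²(r) := (r/4)·[3(ν²−1)r + (ν²+3)(r₊+r₋) − 4νs], N²(r) := (ν²+3)(r−r₊)(r−r₋)/(4R²(r)), N^θ(r) := (2νr − s)/(2R²(r)), Ω_H := −2/(2νr₊ − s), κ₊ := |Ω_H|(ν²+3)(r₊−r₋)/4, and z := (r−r₊)/(r−r₋). Then for all integers n and k the following identity of complex numbers holds: (R²(r)/N²(r))·(κ₊n + ik(N^θ(r)+Ω_H))² + k² = (2κ₊/(|Ω_H| N(r)))² · [z/((1−z)²(ν²+3))]·[(κ₊n + ik(N^θ(r)+Ω_H))²/N²(r) + k²/R²(r)]. In particular, the Minkowski WKB function χ²_𝕄(ρ(r)) with ρ(r)=R(r)/N(r), temperature 2πT=κ₊ and angular velocity Ω = N^θ(r)+Ω_H is an (n,k)-independent positive multiple of the black-hole WKB function χ²_BH(z). -/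

import Mathlib

/-- s := √(r₊ r₋ (ν²+3)). -/
noncomputable def sBH (ν rp rm : ℝ) : ℝ := Real.sqrt (rp * rm * (ν ^ 2 + 3))

/-- R²(r) := (r/4)·[3(ν²−1)r + (ν²+3)(r₊+r₋) − 4νs]. -/
noncomputable def R2 (ν rp rm r : ℝ) : ℝ :=
  r / 4 * (3 * (ν ^ 2 - 1) * r + (ν ^ 2 + 3) * (rp + rm) - 4 * ν * sBH ν rp rm)

/-- N²(r) := (ν²+3)(r−r₊)(r−r₋)/(4R²(r)). -/
noncomputable def N2 (ν rp rm r : ℝ) : ℝ :=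
  (ν ^ 2 + 3) * (r - rp) * (r - rm) / (4 * R2 ν rp rm r)

/-- N^θ(r) := (2νr − s)/(2R²(r)). -/
noncomputable def Nθ (ν rp rm r : ℝ) : ℝ :=
  (2 * ν * r - sBH ν rp rm) / (2 * R2 ν rp rm r)

/-- Ω_H := −2/(2νr₊ − s). -/
noncomputable def ΩH (ν rp rm : ℝ) : ℝ := -2 / (2 * ν * rp - sBH ν rp rm)

/-- κ₊ := |Ω_H|(ν²+3)(r₊−r₋)/4. -/
noncomputable def κBH (ν rp rm : ℝ) : ℝ := |ΩH ν rp rm| * (ν ^ 2 + 3) * (rp - rm) / 4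

/-- z := (r−r₊)/(r−r₋). -/
noncomputable def zBH (rp rm r : ℝ) : ℝ := (r - rp) / (r - rm)

lemma R2_pos (ν rp rm : ℝ) (hν : 1 < ν) (hrm : 0 < rm) (hr : rm < rp)
    (r : ℝ) (hrr : rp < r) : 0 < R2 ν rp rm r := by
  have hrp : 0 < rp := hrm.trans hr
  have hν' : (0:ℝ) < ν ^ 2 - 1 := by nlinarith
  have hs0 : 0 ≤ sBH ν rp rm := Real.sqrt_nonneg _
  have hs2 : sBH ν rp rm ^ 2 = rp * rm * (ν ^ 2 + 3) := Real.sq_sqrt (by positivity)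
  have key : 4 * ν * sBH ν rp rm ≤ 4 * ν ^ 2 * rp + (ν ^ 2 + 3) * rm := by
    have h1 : 4 * ν * sBH ν rp rm = Real.sqrt (16 * ν ^ 2 * (rp * rm * (ν ^ 2 + 3))) := by
      rw [show 16 * ν ^ 2 * (rp * rm * (ν ^ 2 + 3)) = (4 * ν) ^ 2 * (rp * rm * (ν ^ 2 + 3)) by ring,
        Real.sqrt_mul (by positivity), Real.sqrt_sq (by nlinarith)]
      unfold sBH; ring
    rw [h1]
    calc Real.sqrt (16 * ν ^ 2 * (rp * rm * (ν ^ 2 + 3)))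
        ≤ Real.sqrt ((4 * ν ^ 2 * rp + (ν ^ 2 + 3) * rm) ^ 2) :=
          Real.sqrt_le_sqrt (by nlinarith [sq_nonneg (4 * ν ^ 2 * rp - (ν ^ 2 + 3) * rm)])
      _ = _ := Real.sqrt_sq (by nlinarith)
  unfold R2
  have hb : 0 < 3 * (ν ^ 2 - 1) * r + (ν ^ 2 + 3) * (rp + rm) - 4 * ν * sBH ν rp rm := by
    nlinarith [mul_pos hν' (sub_pos.mpr hrr)]
  have hr0 : 0 < r := by linarith
  nlinarith

lemma N2_pos (ν rp rm : ℝ) (hν : 1 < ν) (hrm : 0 < rm) (hr : rm < rp)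
    (r : ℝ) (hrr : rp < r) : 0 < N2 ν rp rm r := by
  have hR2 := R2_pos ν rp rm hν hrm hr r hrr
  have hrrp : (0:ℝ) < r - rp := by linarith
  have hrrm : (0:ℝ) < r - rm := by linarith
  unfold N2
  exact div_pos (mul_pos (mul_pos (by positivity) hrrp) hrrm) (by linarith)

lemma coeff_eq (ν rp rm : ℝ) (hν : 1 < ν) (hrm : 0 < rm) (hr : rm < rp)
    (r : ℝ) (hrr : rp < r) :
    (2 * κBH ν rp rm / (|ΩH ν rp rm| * Real.sqrt (N2 ν rp rm r))) ^ 2 *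
      (zBH rp rm r / ((1 - zBH rp rm r) ^ 2 * (ν ^ 2 + 3))) = R2 ν rp rm r := by
  have hrp : 0 < rp := hrm.trans hr
  have hν' : (0:ℝ) < ν ^ 2 - 1 := by nlinarith
  have hs0 : 0 ≤ sBH ν rp rm := Real.sqrt_nonneg _
  have hs2 : sBH ν rp rm ^ 2 = rp * rm * (ν ^ 2 + 3) := Real.sq_sqrt (by positivity)
  have hslt : sBH ν rp rm < 2 * ν * rp := by
    unfold sBH
    rw [show (2 * ν * rp) = Real.sqrt ((2 * ν * rp) ^ 2) from
      (Real.sqrt_sq (by nlinarith)).symm]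
    apply Real.sqrt_lt_sqrt (by positivity)
    nlinarith [mul_pos hrp (sub_pos.mpr hr), mul_pos (mul_pos hrp hrm) hν']
  have hΩ : ΩH ν rp rm < 0 := by
    unfold ΩH; apply div_neg_of_neg_of_pos; · norm_num
    · linarith
  have hΩa : |ΩH ν rp rm| ≠ 0 := abs_ne_zero.mpr hΩ.ne
  have hR2 : 0 < R2 ν rp rm r := R2_pos ν rp rm hν hrm hr r hrr
  have hrrp : (0:ℝ) < r - rp := by linarith
  have hrrm : (0:ℝ) < r - rm := by linarith
  have hN2 : 0 < N2 ν rp rm r := N2_pos ν rp rm hν hrm hr r hrr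
  have hsq : Real.sqrt (N2 ν rp rm r) ^ 2 = N2 ν rp rm r := Real.sq_sqrt hN2.le
  have h1z : 1 - zBH rp rm r = (rp - rm) / (r - rm) := by
    unfold zBH; field_simp; ring
  have hN2def : N2 ν rp rm r = (ν ^ 2 + 3) * (r - rp) * (r - rm) / (4 * R2 ν rp rm r) := rfl
  rw [h1z]
  unfold κBH zBH
  rw [div_pow, mul_pow, mul_pow, hsq, hN2def]
  have hK : (0:ℝ) < ν ^ 2 + 3 := by positivity
  have hD : (0:ℝ) < rp - rm := by linarith
  generalize |ΩH ν rp rm| = a at hΩa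
  generalize R2 ν rp rm r = R at hR2
  field_simp
  ring

/-- for r > r₊ and all integers n, k, one has the complex identity
(R²/N²)(κ₊n + ik(N^θ+Ω_H))² + k²
  = (2κ₊/(|Ω_H| N))² · [z/((1−z)²(ν²+3))]·[(κ₊n + ik(N^θ+Ω_H))²/N² + k²/R²],
i.e. the Minkowski WKB function χ²_𝕄 with ρ = R/N, 2πT = κ₊, Ω = N^θ+Ω_H is an
(n,k)-independent positive multiple of the black-hole WKB function χ²_BH. -/
theorem stmt8 (ν rp rm : ℝ) (hν : 1 < ν) (hrm : 0 < rm) (hr : rm < rp)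
    (r : ℝ) (hrr : rp < r) (n k : ℤ) :
    ((R2 ν rp rm r : ℂ) / (N2 ν rp rm r : ℂ)) *
        ((κBH ν rp rm : ℂ) * (n : ℂ)
          + Complex.I * (k : ℂ) * ((Nθ ν rp rm r + ΩH ν rp rm : ℝ) : ℂ)) ^ 2
      + (k : ℂ) ^ 2
    = ((2 * κBH ν rp rm / (|ΩH ν rp rm| * Real.sqrt (N2 ν rp rm r)) : ℝ) : ℂ) ^ 2 *
        ((zBH rp rm r / ((1 - zBH rp rm r) ^ 2 * (ν ^ 2 + 3)) : ℝ) : ℂ) *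
        (((κBH ν rp rm : ℂ) * (n : ℂ)
            + Complex.I * (k : ℂ) * ((Nθ ν rp rm r + ΩH ν rp rm : ℝ) : ℂ)) ^ 2
              / (N2 ν rp rm r : ℂ)
          + (k : ℂ) ^ 2 / (R2 ν rp rm r : ℂ)) := by
  have hco : ((2 * κBH ν rp rm / (|ΩH ν rp rm| * Real.sqrt (N2 ν rp rm r)) : ℝ) : ℂ) ^ 2 *
      ((zBH rp rm r / ((1 - zBH rp rm r) ^ 2 * (ν ^ 2 + 3)) : ℝ) : ℂ)
      = (R2 ν rp rm r : ℂ) := by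
    rw [← Complex.ofReal_pow, ← Complex.ofReal_mul, coeff_eq ν rp rm hν hrm hr r hrr]
  rw [hco]
  have hR2C : (R2 ν rp rm r : ℂ) ≠ 0 := by
    exact_mod_cast (R2_pos ν rp rm hν hrm hr r hrr).ne'
  have hN2C : (N2 ν rp rm r : ℂ) ≠ 0 := by
    exact_mod_cast (N2_pos ν rp rm hν hrm hr r hrr).ne'
  field_simp
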